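/- Suppose f̃(T,1) = Π_{j=1}^{n+1}(T - t_j) is a monic self-inversive polynomial with t_1⋯t_{n+1} = 1, all roots distinct, exactly k of which lie on the unit circle, and the corresponding real form g̃ = Φ_n(f̃) has nonzero leading coefficient. Then the sign of det H_n equals (-1)^{(n+1-k)/2}. -/

import Mathlib

open Complex Finset

lemma sign_involution {α : Type*} [DecidableEq α] [Fintype α] (σ : Equiv.Perm α)
    (h : σ ^ 2 = 1) :
    Equiv.Perm.sign σ = (-1 : ℤˣ) ^ (σ.support.card / 2) := by
  have hall : ∀ m ∈ σ.cycleType, m = 2 := fun m hm =>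
    le_antisymm (Nat.le_of_dvd two_pos ((Equiv.Perm.dvd_of_mem_cycleType hm).trans
      (orderOf_dvd_of_pow_eq_one h))) (Equiv.Perm.two_le_of_mem_cycleType hm)
  have hrep : σ.cycleType = Multiset.replicate (Multiset.card σ.cycleType) 2 :=
    Multiset.eq_replicate_card.mpr hall
  have hsum : σ.support.card = 2 * Multiset.card σ.cycleType := by
    conv_lhs => rw [← Equiv.Perm.sum_cycleType, hrep, Multiset.sum_replicate, smul_eq_mul, mul_comm]
  rw [Equiv.Perm.sign_of_cycleType, hsum]
  have h2 : σ.cycleType.sum = 2 * Multiset.card σ.cycleType := by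
    conv_lhs => rw [hrep, Multiset.sum_replicate, smul_eq_mul, mul_comm]
  rw [h2, Nat.mul_div_cancel_left _ two_pos]
  rw [pow_add, pow_mul]
  norm_num

/-- Corollary 2.10: if the monic self-inversive polynomial `f̃(T,1) = Π (T - tⱼ)`
(`Π tⱼ = 1`, roots closed under inversion in the unit circle) has all roots distinct and
exactly `k` of them on the unit circle, then `det H_n` is real with sign
`(-1)^{(n+1-k)/2}`. -/
theorem stmt14 (n k : ℕ) (t : Fin (n + 1) → ℂ) (ht : ∏ j, t j = 1)
    (hinj : Function.Injective t)
    (hsym : ∃ σ : Equiv.Perm (Fin (n + 1)), ∀ j, t (σ j) = (starRingEnd ℂ (t j))⁻¹)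
    (hk : Nat.card {j : Fin (n + 1) // ‖t j‖ = 1} = k) :
    ((Matrix.of fun j k' : Fin (n + 1) => ∑ l, t l ^ ((j : ℤ) - (k' : ℤ))).det).im = 0 ∧
    0 < (-1 : ℝ) ^ ((n + 1 - k) / 2) *
      ((Matrix.of fun j k' : Fin (n + 1) => ∑ l, t l ^ ((j : ℤ) - (k' : ℤ))).det).re := by
  classical
  obtain ⟨σ, hσ⟩ := hsym
  have ht0 : ∀ l, t l ≠ 0 := by
    intro l hl
    have : (∏ j, t j) = 0 := Finset.prod_eq_zero (Finset.mem_univ l) hl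
    rw [ht] at this
    exact one_ne_zero this
  have hconj : ∀ j, (starRingEnd ℂ) (t j) = (t (σ j))⁻¹ := fun j => by rw [hσ j, inv_inv]
  have hσ2 : σ ^ 2 = 1 := by
    ext j
    have h1 : t (σ (σ j)) = t j := by
      rw [hσ (σ j), hσ j, map_inv₀, Complex.conj_conj, inv_inv]
    have h2 : σ (σ j) = j := hinj h1
    simp [pow_two, Equiv.Perm.mul_apply, h2]
  -- fixed points are exactly the roots on the unit circle
  have hfix : ∀ j, ‖t j‖ = 1 ↔ σ j = j := by
    intro j
    constructor
    · intro habs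
      apply hinj
      have h1 : (starRingEnd ℂ) (t j) * t j = 1 := by
        rw [mul_comm, Complex.mul_conj, Complex.normSq_eq_norm_sq, habs]
        norm_num
      rw [hσ j]
      rw [eq_inv_of_mul_eq_one_left h1, inv_inv]
    · intro hfj
      have h1 : t j * (starRingEnd ℂ) (t j) = 1 := by
        have h2 := hσ j
        rw [hfj] at h2
        have h2' := congrArg Inv.inv h2
        rw [inv_inv] at h2'
        rw [← h2', mul_inv_cancel₀ (ht0 j)]
      have h3 : Complex.normSq (t j) = 1 := by
        have := h1
        rw [Complex.mul_conj] at this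
        exact_mod_cast this
      have h4 : ‖t j‖ ^ 2 = 1 := by rw [Complex.sq_norm, h3]
      nlinarith [norm_nonneg (t j)]
  -- counting
  have hkcard : k = (n + 1) - σ.support.card := by
    rw [← hk, Nat.card_congr (Equiv.subtypeEquivRight hfix), Nat.card_eq_fintype_card,
      Fintype.card_subtype]
    have : Finset.filter (fun j => σ j = j) Finset.univ = σ.supportᶜ := by
      ext j; simp [Equiv.Perm.mem_support]
    rw [this, Finset.card_compl, Fintype.card_fin]
  have hsuppcard : σ.support.card = n + 1 - k := by
    rw [hkcard]
    have : σ.support.card ≤ n + 1 := by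
      simpa using Finset.card_le_card (Finset.subset_univ σ.support)
    omega
  -- the matrix factorization
  set Δ : ℂ := (Matrix.vandermonde t).det with hΔ
  set Δ' : ℂ := (Matrix.vandermonde fun i => (t i)⁻¹).det with hΔ'
  have hH : (Matrix.of fun j k' : Fin (n + 1) => ∑ l, t l ^ ((j : ℤ) - (k' : ℤ)))
      = (Matrix.vandermonde t).transpose * (Matrix.vandermonde fun i => (t i)⁻¹) := by
    ext j k'
    simp only [Matrix.of_apply, Matrix.mul_apply, Matrix.transpose_apply,
      Matrix.vandermonde_apply]
    refine Finset.sum_congr rfl fun l _ => ?_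
    rw [zpow_sub₀ (ht0 l), zpow_natCast, zpow_natCast, div_eq_mul_inv, inv_pow]
  have hdet : (Matrix.of fun j k' : Fin (n + 1) => ∑ l, t l ^ ((j : ℤ) - (k' : ℤ))).det
      = Δ * Δ' := by
    rw [hH, Matrix.det_mul, Matrix.det_transpose]
  -- conjugation
  have hvperm : Matrix.vandermonde (fun i => (starRingEnd ℂ) (t i))
      = (Matrix.vandermonde fun i => (t i)⁻¹).submatrix σ id := by
    ext i j
    simp [Matrix.vandermonde_apply, hconj]
  have hconjΔ : (starRingEnd ℂ) Δ = ((Equiv.Perm.sign σ : ℤ) : ℂ) * Δ' := by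
    have h1 : (starRingEnd ℂ) Δ = (Matrix.vandermonde fun i => (starRingEnd ℂ) (t i)).det := by
      simp only [hΔ, Matrix.det_vandermonde, map_prod, map_sub]
    rw [h1, hvperm, Matrix.det_permute]
  -- sign of the involution
  have hsign : Equiv.Perm.sign σ = (-1 : ℤˣ) ^ ((n + 1 - k) / 2) := by
    rw [sign_involution σ hσ2, hsuppcard]
  have hs2 : ((Equiv.Perm.sign σ : ℤ) : ℂ) * ((Equiv.Perm.sign σ : ℤ) : ℂ) = 1 := by
    rcases Int.units_eq_one_or (Equiv.Perm.sign σ) with h | h <;> rw [h] <;> norm_num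
  have hΔ'eq : Δ' = ((Equiv.Perm.sign σ : ℤ) : ℂ) * (starRingEnd ℂ) Δ := by
    rw [hconjΔ, ← mul_assoc, hs2, one_mul]
  have hΔne : Δ ≠ 0 := Matrix.det_vandermonde_ne_zero_iff.mpr hinj
  have hdetH : (Matrix.of fun j k' : Fin (n + 1) => ∑ l, t l ^ ((j : ℤ) - (k' : ℤ))).det
      = ((Equiv.Perm.sign σ : ℤ) : ℂ) * ((Complex.normSq Δ : ℝ) : ℂ) := by
    rw [hdet, hΔ'eq, ← Complex.mul_conj]
    ring
  have hcast : ((Equiv.Perm.sign σ : ℤ) : ℂ) = (((-1 : ℝ) ^ ((n + 1 - k) / 2) : ℝ) : ℂ) := by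
    rw [hsign]
    push_cast
    norm_num
  have hfin : (Matrix.of fun j k' : Fin (n + 1) => ∑ l, t l ^ ((j : ℤ) - (k' : ℤ))).det
      = ((((-1 : ℝ) ^ ((n + 1 - k) / 2) * Complex.normSq Δ : ℝ)) : ℂ) := by
    rw [hdetH, hcast]
    push_cast
    ring
  rw [hfin]
  constructor
  · exact Complex.ofReal_im _
  · rw [Complex.ofReal_re, ← mul_assoc]
    have h5 : (-1 : ℝ) ^ ((n + 1 - k) / 2) * (-1 : ℝ) ^ ((n + 1 - k) / 2) = 1 := by
      rw [← pow_add, ← two_mul, pow_mul]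
      norm_num
    rw [h5, one_mul]
    exact Complex.normSq_pos.mpr hΔne
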